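/- Let B be the k-algebra with generators b_{ij} (1 ≤ i < j ≤ n+1) and relations: b_{ij}b_{im} = q b_{im}b_{ij} for j < m; b_{ij}b_{lj} = q b_{lj}b_{ij} for i < l; b_{ij}b_{lm} = b_{lm}b_{ij} for i < l, j > m; and for i < l, j < m: b_{ij}b_{lm} = b_{lm}b_{ij} if j < l, b_{ij}b_{lm} = q⁻¹b_{lm}b_{ij} + q⁻¹q̂ b_{im} if j = l, b_{ij}b_{lm} = b_{lm}b_{ij} + q̂ b_{im}b_{lj} if j > l. Then there is a well-defined k-algebra homomorphism ψ : B → O_q(B⁺) with ψ(b_{ij}) = y_{ij}, and ψ is an isomorphism of B onto the subalgebra O_q(N⁺). -/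

import Mathlib

open scoped TensorProduct

noncomputable section

namespace QSL

/-- The generator `X i j` of the free algebra underlying `O_q(SL_{n+1})`. -/
def Xf (k : Type) [Field k] (n : ℕ) (i j : Fin (n+1)) :
    FreeAlgebra k (Fin (n+1) × Fin (n+1)) :=
  FreeAlgebra.ι k (i, j)

/-- The number of inversions (the length `ℓ(σ)`) of a permutation. -/
def invCount {m : ℕ} (σ : Equiv.Perm (Fin m)) : ℕ :=
  (Finset.univ.filter (fun p : Fin m × Fin m => p.1 < p.2 ∧ σ p.2 < σ p.1)).card

/-- The quantum determinant `∑_σ (-q)^{ℓ(σ)} X_{1σ(1)} ⋯ X_{n+1,σ(n+1)}`. -/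
def qdet (k : Type) [Field k] (q : k) (n : ℕ) : FreeAlgebra k (Fin (n+1) × Fin (n+1)) :=
  ∑ σ : Equiv.Perm (Fin (n+1)),
    ((-q) ^ invCount σ) • (List.ofFn fun i => Xf k n i (σ i)).prod

/-- Defining relations of `O_q(SL_{n+1})`. -/
inductive SLRel (k : Type) [Field k] (q : k) (n : ℕ) :
    FreeAlgebra k (Fin (n+1) × Fin (n+1)) → FreeAlgebra k (Fin (n+1) × Fin (n+1)) → Prop
  | row {i j m : Fin (n+1)} (h : j < m) :
      SLRel k q n (Xf k n i j * Xf k n i m) (q • (Xf k n i m * Xf k n i j))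
  | col {i l j : Fin (n+1)} (h : i < l) :
      SLRel k q n (Xf k n i j * Xf k n l j) (q • (Xf k n l j * Xf k n i j))
  | swap {i l j m : Fin (n+1)} (h1 : i < l) (h2 : m < j) :
      SLRel k q n (Xf k n i j * Xf k n l m) (Xf k n l m * Xf k n i j)
  | mixed {i l j m : Fin (n+1)} (h1 : i < l) (h2 : j < m) :
      SLRel k q n (Xf k n i j * Xf k n l m)
        (Xf k n l m * Xf k n i j + (q - q⁻¹) • (Xf k n i m * Xf k n l j))
  | det : SLRel k q n (qdet k q n) 1

/-- The quantized coordinate ring `O_q(SL_{n+1})`. -/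
abbrev OqSL (k : Type) [Field k] (q : k) (n : ℕ) := RingQuot (SLRel k q n)

/-- The generator `X i j` of `O_q(SL_{n+1})`. -/
def XSL (k : Type) [Field k] (q : k) (n : ℕ) (i j : Fin (n+1)) : OqSL k q n :=
  RingQuot.mkAlgHom k (SLRel k q n) (Xf k n i j)

/-- Relations `X i j = 0` for `i > j`, defining `O_q(B⁺)`. -/
inductive BpRel (k : Type) [Field k] (q : k) (n : ℕ) : OqSL k q n → OqSL k q n → Prop
  | zero {i j : Fin (n+1)} (h : j < i) : BpRel k q n (XSL k q n i j) 0

/-- Relations `X i j = 0` for `i < j`, defining `O_q(B⁻)`. -/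
inductive BmRel (k : Type) [Field k] (q : k) (n : ℕ) : OqSL k q n → OqSL k q n → Prop
  | zero {i j : Fin (n+1)} (h : i < j) : BmRel k q n (XSL k q n i j) 0

/-- Relations `X i j = 0` for `i ≠ j`, defining `O_q(T)`. -/
inductive TRel (k : Type) [Field k] (q : k) (n : ℕ) : OqSL k q n → OqSL k q n → Prop
  | zero {i j : Fin (n+1)} (h : i ≠ j) : TRel k q n (XSL k q n i j) 0

/-- The quantized coordinate ring `O_q(B⁺)` of the positive Borel. -/
abbrev OqBp (k : Type) [Field k] (q : k) (n : ℕ) := RingQuot (BpRel k q n)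

/-- The quantized coordinate ring `O_q(B⁻)` of the negative Borel. -/
abbrev OqBm (k : Type) [Field k] (q : k) (n : ℕ) := RingQuot (BmRel k q n)

/-- The quantized coordinate ring `O_q(T)` of the maximal torus. -/
abbrev OqT (k : Type) [Field k] (q : k) (n : ℕ) := RingQuot (TRel k q n)

/-- The coset of `X i j` in `O_q(B⁺)`. -/
def XBp (k : Type) [Field k] (q : k) (n : ℕ) (i j : Fin (n+1)) : OqBp k q n :=
  RingQuot.mkAlgHom k (BpRel k q n) (XSL k q n i j)

/-- The coset of `X i j` in `O_q(B⁻)`. -/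
def XBm (k : Type) [Field k] (q : k) (n : ℕ) (i j : Fin (n+1)) : OqBm k q n :=
  RingQuot.mkAlgHom k (BmRel k q n) (XSL k q n i j)

/-- The coset `Y i i` of `X i i` in `O_q(T)`. -/
def YT (k : Type) [Field k] (q : k) (n : ℕ) (i : Fin (n+1)) : OqT k q n :=
  RingQuot.mkAlgHom k (TRel k q n) (XSL k q n i i)

/-- `y i j = X_{ii}⁻¹ X_{ij}` in `O_q(B⁺)`. -/
def yY (k : Type) [Field k] (q : k) (n : ℕ) (i j : Fin (n+1)) : OqBp k q n :=
  Ring.inverse (XBp k q n i i) * XBp k q n i j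

/-- `z i j = X_{ij} X_{jj}⁻¹` in `O_q(B⁺)`. -/
def zZ (k : Type) [Field k] (q : k) (n : ℕ) (i j : Fin (n+1)) : OqBp k q n :=
  XBp k q n i j * Ring.inverse (XBp k q n j j)

/-- The subalgebra `O_q(N⁺)` of `O_q(B⁺)`, generated by the `X_{ii}⁻¹X_{ij}`, `i < j`. -/
def OqNp (k : Type) [Field k] (q : k) (n : ℕ) : Subalgebra k (OqBp k q n) :=
  Algebra.adjoin k {a | ∃ i j : Fin (n+1), i < j ∧ a = yY k q n i j}

/-- The subalgebra `O_q(N⁺)'` of `O_q(B⁺)`, generated by the `X_{ij}X_{jj}⁻¹`, `i < j`. -/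
def OqNp' (k : Type) [Field k] (q : k) (n : ℕ) : Subalgebra k (OqBp k q n) :=
  Algebra.adjoin k {a | ∃ i j : Fin (n+1), i < j ∧ a = zZ k q n i j}

/-- `X_{jj}⁻¹ X_{ji}` in `O_q(B⁻)` (for `i < j`). -/
def yNm (k : Type) [Field k] (q : k) (n : ℕ) (i j : Fin (n+1)) : OqBm k q n :=
  Ring.inverse (XBm k q n j j) * XBm k q n j i

/-- `X_{ji} X_{ii}⁻¹` in `O_q(B⁻)` (for `i < j`). -/
def zNm (k : Type) [Field k] (q : k) (n : ℕ) (i j : Fin (n+1)) : OqBm k q n :=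
  XBm k q n j i * Ring.inverse (XBm k q n i i)

/-- The subalgebra `O_q(N⁻)` of `O_q(B⁻)`, generated by the `X_{jj}⁻¹X_{ji}`, `i < j`. -/
def OqNm (k : Type) [Field k] (q : k) (n : ℕ) : Subalgebra k (OqBm k q n) :=
  Algebra.adjoin k {a | ∃ i j : Fin (n+1), i < j ∧ a = yNm k q n i j}

/-- The subalgebra `O_q(N⁻)'` of `O_q(B⁻)`, generated by the `X_{ji}X_{ii}⁻¹`, `i < j`. -/
def OqNm' (k : Type) [Field k] (q : k) (n : ℕ) : Subalgebra k (OqBm k q n) :=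
  Algebra.adjoin k {a | ∃ i j : Fin (n+1), i < j ∧ a = zNm k q n i j}

end QSL

namespace QSL

/-- The generator `b i j` (for `i < j`) of the free algebra underlying the presented algebra `B`. -/
def bf (k : Type) [Field k] (n : ℕ) (i j : Fin (n+1)) (h : i < j) :
    FreeAlgebra k {p : Fin (n+1) × Fin (n+1) // p.1 < p.2} :=
  FreeAlgebra.ι k ⟨(i, j), h⟩

/-- The defining relations of the presented algebra `B`. -/
inductive BRel (k : Type) [Field k] (q : k) (n : ℕ) :
    FreeAlgebra k {p : Fin (n+1) × Fin (n+1) // p.1 < p.2} →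
    FreeAlgebra k {p : Fin (n+1) × Fin (n+1) // p.1 < p.2} → Prop
  | row {i j m : Fin (n+1)} (h1 : i < j) (h2 : j < m) :
      BRel k q n (bf k n i j h1 * bf k n i m (h1.trans h2))
        (q • (bf k n i m (h1.trans h2) * bf k n i j h1))
  | col {i l j : Fin (n+1)} (h1 : i < l) (h2 : l < j) :
      BRel k q n (bf k n i j (h1.trans h2) * bf k n l j h2)
        (q • (bf k n l j h2 * bf k n i j (h1.trans h2)))
  | swap {i l m j : Fin (n+1)} (h1 : i < l) (h2 : l < m) (h3 : m < j) :
      BRel k q n (bf k n i j ((h1.trans h2).trans h3) * bf k n l m h2)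
        (bf k n l m h2 * bf k n i j ((h1.trans h2).trans h3))
  | comm {i j l m : Fin (n+1)} (h1 : i < j) (h2 : j < l) (h3 : l < m) :
      BRel k q n (bf k n i j h1 * bf k n l m h3)
        (bf k n l m h3 * bf k n i j h1)
  | adj {i j m : Fin (n+1)} (h1 : i < j) (h2 : j < m) :
      BRel k q n (bf k n i j h1 * bf k n j m h2)
        (q⁻¹ • (bf k n j m h2 * bf k n i j h1) + (q⁻¹ * (q - q⁻¹)) • bf k n i m (h1.trans h2))
  | mixed {i l j m : Fin (n+1)} (h1 : i < l) (h2 : l < j) (h3 : j < m) :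
      BRel k q n (bf k n i j (h1.trans h2) * bf k n l m (h2.trans h3))
        (bf k n l m (h2.trans h3) * bf k n i j (h1.trans h2) +
          (q - q⁻¹) • (bf k n i m ((h1.trans h2).trans h3) * bf k n l j h2))

/-- The presented algebra `B`. -/
abbrev Balg (k : Type) [Field k] (q : k) (n : ℕ) := RingQuot (BRel k q n)

/-- The generator `b i j` of the presented algebra `B`. -/
def bB (k : Type) [Field k] (q : k) (n : ℕ) (i j : Fin (n+1)) (h : i < j) : Balg k q n :=
  RingQuot.mkAlgHom k (BRel k q n) (bf k n i j h)

end QSL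

namespace QSL

theorem exists_lt_of_ne_one {m : ℕ} {σ : Equiv.Perm (Fin m)} (h : σ ≠ 1) :
    ∃ i, σ i < i := by
  by_contra hc
  push_neg at hc
  apply h
  have hsum : ∑ i : Fin m, ((σ i : ℕ)) = ∑ i : Fin m, (i : ℕ) :=
    Equiv.sum_comp σ (fun i => (i : ℕ))
  have := (Finset.sum_eq_sum_iff_of_le (f := fun i : Fin m => (i : ℕ))
    (g := fun i => (σ i : ℕ)) (s := Finset.univ)
    (fun i _ => by exact_mod_cast hc i)).mp hsum.symm
  ext i
  exact ((this i (Finset.mem_univ i)).symm : ((σ i : ℕ) = i))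

theorem invCount_one' {m : ℕ} :
    (Finset.univ.filter (fun p : Fin m × Fin m => p.1 < p.2 ∧ (1 : Equiv.Perm (Fin m)) p.2 < (1 : Equiv.Perm (Fin m)) p.1)).card = 0 := by
  rw [Finset.card_eq_zero, Finset.filter_eq_empty_iff]
  rintro p - ⟨h1, h2⟩
  simp only [Equiv.Perm.one_apply] at h2
  exact absurd h1 (not_lt.mpr h2.le)

theorem isUnit_of_mem_list_prod_one {M : Type*} [Monoid M] [DecidableEq M] {l : List M}
    (hc : ∀ a ∈ l, ∀ b ∈ l, Commute a b) (hp : l.prod = 1) {a : M} (ha : a ∈ l) :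
    ∃ b : M, a * b = 1 ∧ b * a = 1 := by
  have hperm : l.Perm (a :: l.erase a) := List.perm_cons_erase ha
  have hpw : l.Pairwise Commute := by
    refine List.pairwise_iff_forall_sublist.mpr ?_
    intro x y hxy
    exact hc x (hxy.subset (by simp)) y (hxy.subset (by simp))
  have h1 : a * (l.erase a).prod = 1 := by
    rw [← List.prod_cons, ← hperm.prod_eq' hpw, hp]
  have hcomm : Commute a (l.erase a).prod :=
    Commute.list_prod_right _ _ (fun b hb => hc a ha b (List.mem_of_mem_erase hb))
  exact ⟨(l.erase a).prod, h1, by rw [← hcomm, h1]⟩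

theorem inverse_eq {M : Type*} [MonoidWithZero M] {a u : M}
    (h1 : u * a = 1) (h2 : a * u = 1) : Ring.inverse a = u := by
  have ha : IsUnit a := ⟨⟨a, u, h2, h1⟩, rfl⟩
  calc Ring.inverse a = Ring.inverse a * (a * u) := by rw [h2, mul_one]
  _ = u := by rw [← mul_assoc, Ring.inverse_mul_cancel a ha, one_mul]

theorem conj_left {k A : Type*} [CommSemiring k] [Ring A] [Algebra k A]
    {d u a : A} (hu1 : u * d = 1) (hu2 : d * u = 1) {c : k}
    (h : d * a = c • (a * d)) : a * u = c • (u * a) := by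
  have key : u * (d * a) * u = c • (u * a) := by
    rw [h, mul_smul_comm, smul_mul_assoc, mul_assoc, mul_assoc, hu2, mul_one]
  rw [← key]
  simp only [← mul_assoc, hu1, one_mul]

theorem conj_right {k A : Type*} [CommSemiring k] [Ring A] [Algebra k A]
    {d u a : A} (hu1 : u * d = 1) (hu2 : d * u = 1) {c : k}
    (h : a * d = c • (d * a)) : u * a = c • (a * u) := by
  have key : u * (a * d) * u = c • (a * u) := by
    rw [h, mul_smul_comm, smul_mul_assoc, ← mul_assoc, hu1, one_mul]
  rw [← key, mul_assoc, mul_assoc, hu2, mul_one]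

theorem conj_comm {A : Type*} [Monoid A] {d u a : A}
    (hu1 : u * d = 1) (hu2 : d * u = 1)
    (h : d * a = a * d) : u * a = a * u := by
  have key : u * (a * d) * u = a * u := by
    rw [← h, ← mul_assoc, hu1, one_mul]
  rw [← key, mul_assoc, mul_assoc, hu2, mul_one]

/-- images of inverses under algebra maps -/
theorem map_two_sided_inv {R A B : Type*} [CommSemiring R] [Semiring A] [Semiring B]
    [Algebra R A] [Algebra R B] (f : A →ₐ[R] B) {a u : A}
    (h1 : u * a = 1) (h2 : a * u = 1) {v : B}
    (hv2 : f a * v = 1) : f u = v := by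
  calc f u = f u * (f a * v) := by rw [hv2, mul_one]
  _ = f (u * a) * v := by rw [← mul_assoc, map_mul]
  _ = v := by rw [h1, map_one, one_mul]

end QSL
namespace QSL
section PartA
variable {k : Type} [Field k] {q : k} {n : ℕ}

theorem XBp_zero {i j : Fin (n+1)} (h : j < i) : XBp k q n i j = 0 := by
  have h1 := RingQuot.mkAlgHom_rel k (BpRel.zero (k:=k) (q:=q) (n:=n) h)
  rw [map_zero] at h1
  exact h1

theorem xrow (i : Fin (n+1)) {j m : Fin (n+1)} (h : j < m) :
    XBp k q n i j * XBp k q n i m = q • (XBp k q n i m * XBp k q n i j) := by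
  have h1 := RingQuot.mkAlgHom_rel k (SLRel.row (k:=k) (q:=q) (n:=n) (i:=i) h)
  rw [map_mul, map_smul, map_mul] at h1
  have h2 := congrArg (RingQuot.mkAlgHom k (BpRel k q n)) h1
  rw [map_mul, map_smul, map_mul] at h2
  exact h2

theorem xcol (j : Fin (n+1)) {i l : Fin (n+1)} (h : i < l) :
    XBp k q n i j * XBp k q n l j = q • (XBp k q n l j * XBp k q n i j) := by
  have h1 := RingQuot.mkAlgHom_rel k (SLRel.col (k:=k) (q:=q) (n:=n) (j:=j) h)
  rw [map_mul, map_smul, map_mul] at h1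
  have h2 := congrArg (RingQuot.mkAlgHom k (BpRel k q n)) h1
  rw [map_mul, map_smul, map_mul] at h2
  exact h2

theorem xswap {i l j m : Fin (n+1)} (h1 : i < l) (h2 : m < j) :
    XBp k q n i j * XBp k q n l m = XBp k q n l m * XBp k q n i j := by
  have h3 := RingQuot.mkAlgHom_rel k (SLRel.swap (k:=k) (q:=q) (n:=n) h1 h2)
  rw [map_mul, map_mul] at h3
  have h4 := congrArg (RingQuot.mkAlgHom k (BpRel k q n)) h3
  rw [map_mul, map_mul] at h4
  exact h4

theorem xmixed {i l j m : Fin (n+1)} (h1 : i < l) (h2 : j < m) :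
    XBp k q n i j * XBp k q n l m =
      XBp k q n l m * XBp k q n i j + (q - q⁻¹) • (XBp k q n i m * XBp k q n l j) := by
  have h3 := RingQuot.mkAlgHom_rel k (SLRel.mixed (k:=k) (q:=q) (n:=n) h1 h2)
  rw [map_mul, map_add, map_mul, map_smul, map_mul] at h3
  have h4 := congrArg (RingQuot.mkAlgHom k (BpRel k q n)) h3
  rw [map_mul, map_add, map_mul, map_smul, map_mul] at h4
  exact h4

theorem xdet_Bp :
    (∑ σ : Equiv.Perm (Fin (n+1)),
      ((-q) ^ invCount σ) • (List.ofFn fun i => XBp k q n i (σ i)).prod) = 1 := by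
  have h1 := RingQuot.mkAlgHom_rel k (SLRel.det (k:=k) (q:=q) (n:=n))
  rw [map_one] at h1
  have h2 := congrArg (RingQuot.mkAlgHom k (BpRel k q n)) h1
  rw [map_one] at h2
  rw [← h2, qdet, map_sum, map_sum]
  refine Finset.sum_congr rfl (fun σ _ => ?_)
  rw [map_smul, map_smul, map_list_prod, map_list_prod, List.map_ofFn, List.map_ofFn]
  rfl

theorem invCount_one {m : ℕ} : invCount (1 : Equiv.Perm (Fin m)) = 0 := invCount_one'

theorem diag_prod_one :
    (List.ofFn fun i => XBp k q n i i).prod = 1 := by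
  rw [← xdet_Bp (k:=k) (q:=q) (n:=n)]
  rw [Finset.sum_eq_single_of_mem (1 : Equiv.Perm (Fin (n+1))) (Finset.mem_univ _)]
  · rw [invCount_one, pow_zero, one_smul]
    congr 1
  · intro σ _ hσ
    obtain ⟨i, hi⟩ := exists_lt_of_ne_one hσ
    have hz : (0 : OqBp k q n) ∈ List.ofFn fun i => XBp k q n i (σ i) := by
      rw [List.mem_ofFn]
      exact ⟨i, XBp_zero hi⟩
    rw [List.prod_eq_zero hz, smul_zero]

theorem diag_commute (i j : Fin (n+1)) :
    XBp k q n i i * XBp k q n j j = XBp k q n j j * XBp k q n i i := by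
  rcases lt_trichotomy i j with h | h | h
  · have := xmixed (k:=k) (q:=q) (n:=n) h h
    rwa [XBp_zero h, mul_zero, smul_zero, add_zero] at this
  · rw [h]
  · have := xmixed (k:=k) (q:=q) (n:=n) h h
    rw [XBp_zero h, mul_zero, smul_zero, add_zero] at this
    exact this.symm

theorem isUnit_diag (i : Fin (n+1)) : IsUnit (XBp k q n i i) := by
  classical
  obtain ⟨b, hb1, hb2⟩ := isUnit_of_mem_list_prod_one
    (l := List.ofFn fun r => XBp k q n r r)
    (fun a ha b hb => by
      rw [List.mem_ofFn] at ha hb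
      obtain ⟨r, rfl⟩ := ha
      obtain ⟨s, rfl⟩ := hb
      exact diag_commute r s)
    diag_prod_one
    (a := XBp k q n i i) (by rw [List.mem_ofFn]; exact ⟨i, rfl⟩)
  exact ⟨⟨_, b, hb1, hb2⟩, rfl⟩

end PartA
end QSL
namespace QSL
section PartB
variable {k : Type} [Field k] {q : k} {n : ℕ}

/-- `d_l` commutes with `x_{ij}` when `l ∉ {i, j}` and `i < j`. -/
theorem dcomm_ne {i j l : Fin (n+1)} (hij : i < j) (h1 : l ≠ i) (h2 : l ≠ j) :
    XBp k q n l l * XBp k q n i j = XBp k q n i j * XBp k q n l l := by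
  rcases lt_trichotomy l i with h | h | h
  · have := xmixed (k:=k) (q:=q) (n:=n) h (h.trans hij)
    rwa [XBp_zero h, mul_zero, smul_zero, add_zero] at this
  · exact absurd h h1
  · rcases lt_trichotomy l j with h' | h' | h'
    · exact (xswap h h').symm
    · exact absurd h' h2
    · have := xmixed (k:=k) (q:=q) (n:=n) h h'
      rw [XBp_zero h', mul_zero, smul_zero, add_zero] at this
      exact this.symm

theorem x_adj {i j m : Fin (n+1)} (h1 : i < j) (h2 : j < m) :
    XBp k q n i j * XBp k q n j m =
      XBp k q n j m * XBp k q n i j + (q - q⁻¹) • (XBp k q n i m * XBp k q n j j) :=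
  xmixed h1 h2

theorem xcomm_disjoint {i j l m : Fin (n+1)} (h1 : i < j) (h2 : j < l) (h3 : l < m) :
    XBp k q n i j * XBp k q n l m = XBp k q n l m * XBp k q n i j := by
  have := xmixed (k:=k) (q:=q) (n:=n) (h1.trans h2) (h2.trans h3)
  rwa [XBp_zero h2, mul_zero, smul_zero, add_zero] at this

-- inverse-commutation helpers

theorem h_ud (i : Fin (n+1)) :
    Ring.inverse (XBp k q n i i) * XBp k q n i i = 1 :=
  Ring.inverse_mul_cancel _ (isUnit_diag i)

theorem h_du (i : Fin (n+1)) :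
    XBp k q n i i * Ring.inverse (XBp k q n i i) = 1 :=
  Ring.mul_inverse_cancel _ (isUnit_diag i)

theorem hx_u_row {i m : Fin (n+1)} (h : i < m) :
    XBp k q n i m * Ring.inverse (XBp k q n i i) =
      q • (Ring.inverse (XBp k q n i i) * XBp k q n i m) :=
  by exact conj_left (k:=k) (A:=OqBp k q n) (h_ud i) (h_du i) (xrow i h)

theorem hu_x_col {i j : Fin (n+1)} (h : i < j) :
    Ring.inverse (XBp k q n j j) * XBp k q n i j =
      q • (XBp k q n i j * Ring.inverse (XBp k q n j j)) :=
  by exact conj_right (k:=k) (A:=OqBp k q n) (h_ud j) (h_du j) (xcol j h)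

theorem hu_comm {i j l : Fin (n+1)} (hij : i < j) (h1 : l ≠ i) (h2 : l ≠ j) :
    Ring.inverse (XBp k q n l l) * XBp k q n i j =
      XBp k q n i j * Ring.inverse (XBp k q n l l) :=
  by exact conj_comm (h_ud l) (h_du l) (dcomm_ne hij h1 h2)

theorem hu_u_comm (i j : Fin (n+1)) :
    Ring.inverse (XBp k q n i i) * Ring.inverse (XBp k q n j j) =
      Ring.inverse (XBp k q n j j) * Ring.inverse (XBp k q n i i) := by
  have h1 : XBp k q n i i * Ring.inverse (XBp k q n j j) =
      Ring.inverse (XBp k q n j j) * XBp k q n i i :=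
    by exact (conj_comm (h_ud j) (h_du j) (diag_commute j i)).symm
  exact conj_comm (h_ud i) (h_du i) h1

end PartB
end QSL
namespace QSL
section PartC
variable {k : Type} [Field k] {q : k} {n : ℕ}

theorem reorder {u₁ u₂ a b : OqBp k q n} {c : k}
    (h : a * u₂ = c • (u₂ * a)) :
    (u₁ * a) * (u₂ * b) = c • (u₁ * (u₂ * (a * b))) := by
  rw [mul_assoc, ← mul_assoc a, h, smul_mul_assoc, mul_smul_comm, mul_assoc u₂ a b]

theorem reorder_comm {u₁ u₂ a b : OqBp k q n}
    (h : a * u₂ = u₂ * a) :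
    (u₁ * a) * (u₂ * b) = u₁ * (u₂ * (a * b)) := by
  rw [mul_assoc, ← mul_assoc a, h, mul_assoc u₂ a b]

theorem swap_u {u₁ u₂ x : OqBp k q n} (h : u₁ * u₂ = u₂ * u₁) :
    u₁ * (u₂ * x) = u₂ * (u₁ * x) := by
  rw [← mul_assoc, h, mul_assoc]

theorem yrow {i j m : Fin (n+1)} (h1 : i < j) (h2 : j < m) :
    yY k q n i j * yY k q n i m = q • (yY k q n i m * yY k q n i j) := by
  show (Ring.inverse (XBp k q n i i) * XBp k q n i j) *
      (Ring.inverse (XBp k q n i i) * XBp k q n i m) =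
    q • ((Ring.inverse (XBp k q n i i) * XBp k q n i m) *
      (Ring.inverse (XBp k q n i i) * XBp k q n i j))
  rw [reorder (hx_u_row h1), xrow i h2, reorder (hx_u_row (h1.trans h2))]
  simp only [mul_smul_comm, smul_smul]

theorem ycol {i l j : Fin (n+1)} (h1 : i < l) (h2 : l < j) :
    yY k q n i j * yY k q n l j = q • (yY k q n l j * yY k q n i j) := by
  show (Ring.inverse (XBp k q n i i) * XBp k q n i j) *
      (Ring.inverse (XBp k q n l l) * XBp k q n l j) =
    q • ((Ring.inverse (XBp k q n l l) * XBp k q n l j) *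
      (Ring.inverse (XBp k q n i i) * XBp k q n i j))
  rw [reorder_comm ((hu_comm (h1.trans h2) h1.ne' h2.ne).symm),
    reorder_comm ((hu_comm h2 h1.ne (h1.trans h2).ne).symm),
    xcol j h1, swap_u (hu_u_comm l i)]
  simp only [mul_smul_comm]

theorem yswap {i l m j : Fin (n+1)} (h1 : i < l) (h2 : l < m) (h3 : m < j) :
    yY k q n i j * yY k q n l m = yY k q n l m * yY k q n i j := by
  show (Ring.inverse (XBp k q n i i) * XBp k q n i j) *
      (Ring.inverse (XBp k q n l l) * XBp k q n l m) =
    (Ring.inverse (XBp k q n l l) * XBp k q n l m) *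
      (Ring.inverse (XBp k q n i i) * XBp k q n i j)
  rw [reorder_comm ((hu_comm ((h1.trans h2).trans h3) h1.ne' (h2.trans h3).ne).symm),
    reorder_comm ((hu_comm h2 h1.ne (h1.trans h2).ne).symm),
    xswap h1 h3, swap_u (hu_u_comm l i)]

theorem ycomm {i j l m : Fin (n+1)} (h1 : i < j) (h2 : j < l) (h3 : l < m) :
    yY k q n i j * yY k q n l m = yY k q n l m * yY k q n i j := by
  show (Ring.inverse (XBp k q n i i) * XBp k q n i j) *
      (Ring.inverse (XBp k q n l l) * XBp k q n l m) =
    (Ring.inverse (XBp k q n l l) * XBp k q n l m) *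
      (Ring.inverse (XBp k q n i i) * XBp k q n i j)
  rw [reorder_comm ((hu_comm h1 (h1.trans h2).ne' h2.ne').symm),
    reorder_comm ((hu_comm h3 (h1.trans h2).ne ((h1.trans h2).trans h3).ne).symm),
    xcomm_disjoint h1 h2 h3, swap_u (hu_u_comm l i)]

theorem yadj (hq0 : q ≠ 0) {i j m : Fin (n+1)} (h1 : i < j) (h2 : j < m) :
    yY k q n i j * yY k q n j m =
      q⁻¹ • (yY k q n j m * yY k q n i j) + (q⁻¹ * (q - q⁻¹)) • yY k q n i m := by
  have hinv : XBp k q n i j * Ring.inverse (XBp k q n j j) =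
      q⁻¹ • (Ring.inverse (XBp k q n j j) * XBp k q n i j) :=
    ((inv_smul_eq_iff₀ hq0).mpr (hu_x_col h1)).symm
  show (Ring.inverse (XBp k q n i i) * XBp k q n i j) *
      (Ring.inverse (XBp k q n j j) * XBp k q n j m) =
    q⁻¹ • ((Ring.inverse (XBp k q n j j) * XBp k q n j m) *
      (Ring.inverse (XBp k q n i i) * XBp k q n i j)) +
    (q⁻¹ * (q - q⁻¹)) • (Ring.inverse (XBp k q n i i) * XBp k q n i m)
  rw [reorder hinv, x_adj h1 h2]
  have hmid : Ring.inverse (XBp k q n j j) * (XBp k q n i m * XBp k q n j j) =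
      XBp k q n i m := by
    rw [← mul_assoc, hu_comm (h1.trans h2) h1.ne' h2.ne, mul_assoc, h_ud j, mul_one]
  rw [mul_add, mul_add, mul_smul_comm, mul_smul_comm, hmid, smul_add, smul_smul]
  rw [reorder_comm ((hu_comm h2 h1.ne (h1.trans h2).ne).symm), swap_u (hu_u_comm j i)]

theorem ymixed {i l j m : Fin (n+1)} (h1 : i < l) (h2 : l < j) (h3 : j < m) :
    yY k q n i j * yY k q n l m =
      yY k q n l m * yY k q n i j + (q - q⁻¹) • (yY k q n i m * yY k q n l j) := by
  show (Ring.inverse (XBp k q n i i) * XBp k q n i j) *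
      (Ring.inverse (XBp k q n l l) * XBp k q n l m) =
    (Ring.inverse (XBp k q n l l) * XBp k q n l m) *
      (Ring.inverse (XBp k q n i i) * XBp k q n i j) +
    (q - q⁻¹) • ((Ring.inverse (XBp k q n i i) * XBp k q n i m) *
      (Ring.inverse (XBp k q n l l) * XBp k q n l j))
  rw [reorder_comm ((hu_comm (h1.trans h2) h1.ne' h2.ne).symm),
    xmixed h1 h3,
    reorder_comm ((hu_comm (h2.trans h3) h1.ne ((h1.trans h2).trans h3).ne).symm),
    reorder_comm ((hu_comm ((h1.trans h2).trans h3) h1.ne' (h2.trans h3).ne).symm),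
    swap_u (hu_u_comm l i)]
  rw [mul_add, mul_add, mul_smul_comm, mul_smul_comm]

end PartC
end QSL
namespace QSL
section PartD
variable {k : Type} [Field k] {q : k} {n : ℕ}

/-- The algebra map `FreeAlgebra → O_q(B⁺)` underlying `ψ`. -/
def psiFree (k : Type) [Field k] (q : k) (n : ℕ) :
    FreeAlgebra k {p : Fin (n+1) × Fin (n+1) // p.1 < p.2} →ₐ[k] OqBp k q n :=
  FreeAlgebra.lift k (fun p => yY k q n p.1.1 p.1.2)

theorem psiFree_bf {i j : Fin (n+1)} (h : i < j) :
    psiFree k q n (bf k n i j h) = yY k q n i j := by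
  simp [psiFree, bf]

theorem psiFree_rel (hq0 : q ≠ 0) :
    ∀ ⦃x y⦄, BRel k q n x y → psiFree k q n x = psiFree k q n y := by
  intro x y hxy
  induction hxy with
  | row h1 h2 =>
      rw [map_mul, map_smul, map_mul, psiFree_bf, psiFree_bf]
      exact yrow h1 h2
  | col h1 h2 =>
      rw [map_mul, map_smul, map_mul, psiFree_bf, psiFree_bf]
      exact ycol h1 h2
  | swap h1 h2 h3 =>
      rw [map_mul, map_mul, psiFree_bf, psiFree_bf]
      exact yswap h1 h2 h3
  | comm h1 h2 h3 =>
      rw [map_mul, map_mul, psiFree_bf, psiFree_bf]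
      exact ycomm h1 h2 h3
  | adj h1 h2 =>
      rw [map_mul, map_add, map_smul, map_smul, map_mul, psiFree_bf, psiFree_bf, psiFree_bf]
      exact yadj hq0 h1 h2
  | mixed h1 h2 h3 =>
      rw [map_mul, map_add, map_mul, map_smul, map_mul,
        psiFree_bf, psiFree_bf, psiFree_bf, psiFree_bf]
      exact ymixed h1 h2 h3

/-- The algebra map `ψ : B → O_q(B⁺)`. -/
def psiMap (k : Type) [Field k] (q : k) (n : ℕ) (hq0 : q ≠ 0) : Balg k q n →ₐ[k] OqBp k q n :=
  RingQuot.liftAlgHom k ⟨psiFree k q n, psiFree_rel hq0⟩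

theorem psiMap_bB (hq0 : q ≠ 0) {i j : Fin (n+1)} (h : i < j) :
    psiMap k q n hq0 (bB k q n i j h) = yY k q n i j := by
  rw [bB, psiMap, RingQuot.liftAlgHom_mkAlgHom_apply]
  exact psiFree_bf h

end PartD
end QSL
namespace QSL
section PartE
variable {k : Type} [Field k] {q : k} {n : ℕ}

theorem balg_adjoin_top :
    Algebra.adjoin k (Set.range
      (fun p : {p : Fin (n+1) × Fin (n+1) // p.1 < p.2} => bB k q n p.1.1 p.1.2 p.2)) = ⊤ := by
  have h0 : (Set.range (fun p : {p : Fin (n+1) × Fin (n+1) // p.1 < p.2} =>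
      bB k q n p.1.1 p.1.2 p.2)) =
      (RingQuot.mkAlgHom k (BRel k q n)) '' (Set.range (FreeAlgebra.ι k)) := by
    rw [← Set.range_comp]
    rfl
  rw [h0, ← AlgHom.map_adjoin, FreeAlgebra.adjoin_range_ι, Algebra.map_top]
  rw [AlgHom.range_eq_top]
  exact RingQuot.mkAlgHom_surjective k _

theorem psiMap_range (hq0 : q ≠ 0) :
    (psiMap k q n hq0).range = OqNp k q n := by
  rw [← Algebra.map_top, ← balg_adjoin_top (k:=k) (q:=q) (n:=n), AlgHom.map_adjoin, OqNp]
  congr 1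
  ext a
  constructor
  · rintro ⟨-, ⟨p, rfl⟩, rfl⟩
    exact ⟨p.1.1, p.1.2, p.2, psiMap_bB hq0 p.2⟩
  · rintro ⟨i, j, hij, rfl⟩
    exact ⟨bB k q n i j hij, ⟨⟨(i, j), hij⟩, rfl⟩, psiMap_bB hq0 hij⟩

end PartE
end QSL
namespace QSL
section PartF

/-- the "exponent" pairing -/
def gfun (n : ℕ) (γ : Fin n →₀ ℤ) (i : Fin (n+1)) : ℤ :=
  if h : i = Fin.last n then 0 else γ (i.castPred h)

/-- image of the torus generators in the lattice -/
def cvec (n : ℕ) (i : Fin (n+1)) : Fin n →₀ ℤ :=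
  if h : i = Fin.last n then -(∑ r : Fin n, Finsupp.single r 1)
  else Finsupp.single (i.castPred h) 1

variable {n : ℕ}

theorem gfun_add (γ δ : Fin n →₀ ℤ) (i : Fin (n+1)) :
    gfun n (γ + δ) i = gfun n γ i + gfun n δ i := by
  unfold gfun
  split
  · simp
  · simp [Finsupp.add_apply]

theorem gfun_zero (i : Fin (n+1)) : gfun n 0 i = 0 := by
  unfold gfun; split <;> simp

theorem sum_single_apply (r : Fin n) : (∑ s : Fin n, Finsupp.single s (1 : ℤ)) r = 1 := by
  rw [Finsupp.finset_sum_apply]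
  rw [Finset.sum_eq_single_of_mem r (Finset.mem_univ r)]
  · simp
  · intro s _ hs
    exact Finsupp.single_eq_of_ne hs.symm

theorem gfun_cvec (l r : Fin (n+1)) :
    gfun n (cvec n l) r =
      (if r = l then 1 else 0) + (if l = Fin.last n then -1 else 0) := by
  unfold gfun cvec
  by_cases hr : r = Fin.last n
  · rw [dif_pos hr]
    by_cases hl : l = Fin.last n
    · simp [hr, hl]
    · rw [if_neg hl, add_zero, if_neg (fun h : r = l => hl (h ▸ hr))]
  · rw [dif_neg hr]
    by_cases hl : l = Fin.last n
    · rw [if_neg (fun h : r = l => hr (h.trans hl)), if_pos hl, dif_pos hl]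
      simp [sum_single_apply]
    · rw [dif_neg hl, if_neg hl, add_zero]
      by_cases hrl : r = l
      · subst hrl
        simp
      · rw [if_neg hrl]
        refine Finsupp.single_eq_of_ne ?_
        intro hc
        apply hrl
        have := congrArg Fin.castSucc hc
        rw [Fin.castSucc_castPred, Fin.castSucc_castPred] at this
        exact this

theorem cvec_sum : (∑ i : Fin (n+1), cvec n i) = 0 := by
  rw [Fin.sum_univ_castSucc]
  have h1 : ∀ r : Fin n, cvec n (Fin.castSucc r) = Finsupp.single r 1 := by
    intro r
    unfold cvec
    rw [dif_neg (Fin.castSucc_lt_last r).ne]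
    rw [Fin.castPred_castSucc]
  have h2 : cvec n (Fin.last n) = -(∑ r : Fin n, Finsupp.single r 1) := by
    simp [cvec]
  rw [h2, Finset.sum_congr rfl (fun r _ => h1 r), add_neg_cancel]

end PartF
end QSL
namespace QSL
section PartG
variable {k : Type} [Field k] {q : k} {n : ℕ}

theorem brow {i j m : Fin (n+1)} (h1 : i < j) (h2 : j < m) :
    bB k q n i j h1 * bB k q n i m (h1.trans h2) =
      q • (bB k q n i m (h1.trans h2) * bB k q n i j h1) := by
  have h := RingQuot.mkAlgHom_rel k (BRel.row (k:=k) (q:=q) (n:=n) h1 h2)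
  rwa [map_mul, map_smul, map_mul] at h

theorem bcol {i l j : Fin (n+1)} (h1 : i < l) (h2 : l < j) :
    bB k q n i j (h1.trans h2) * bB k q n l j h2 =
      q • (bB k q n l j h2 * bB k q n i j (h1.trans h2)) := by
  have h := RingQuot.mkAlgHom_rel k (BRel.col (k:=k) (q:=q) (n:=n) h1 h2)
  rwa [map_mul, map_smul, map_mul] at h

theorem bswap {i l m j : Fin (n+1)} (h1 : i < l) (h2 : l < m) (h3 : m < j) :
    bB k q n i j ((h1.trans h2).trans h3) * bB k q n l m h2 =
      bB k q n l m h2 * bB k q n i j ((h1.trans h2).trans h3) := by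
  have h := RingQuot.mkAlgHom_rel k (BRel.swap (k:=k) (q:=q) (n:=n) h1 h2 h3)
  rwa [map_mul, map_mul] at h

theorem bcomm {i j l m : Fin (n+1)} (h1 : i < j) (h2 : j < l) (h3 : l < m) :
    bB k q n i j h1 * bB k q n l m h3 = bB k q n l m h3 * bB k q n i j h1 := by
  have h := RingQuot.mkAlgHom_rel k (BRel.comm (k:=k) (q:=q) (n:=n) h1 h2 h3)
  rwa [map_mul, map_mul] at h

theorem badj {i j m : Fin (n+1)} (h1 : i < j) (h2 : j < m) :
    bB k q n i j h1 * bB k q n j m h2 =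
      q⁻¹ • (bB k q n j m h2 * bB k q n i j h1) +
        (q⁻¹ * (q - q⁻¹)) • bB k q n i m (h1.trans h2) := by
  have h := RingQuot.mkAlgHom_rel k (BRel.adj (k:=k) (q:=q) (n:=n) h1 h2)
  rwa [map_mul, map_add, map_smul, map_smul, map_mul] at h

theorem badj' (hq0 : q ≠ 0) {i j m : Fin (n+1)} (h1 : i < j) (h2 : j < m) :
    q • (bB k q n i j h1 * bB k q n j m h2) =
      bB k q n j m h2 * bB k q n i j h1 +
        (q - q⁻¹) • bB k q n i m (h1.trans h2) := by
  rw [badj h1 h2, smul_add, smul_smul, smul_smul, mul_inv_cancel₀ hq0, one_smul,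
    ← mul_assoc, mul_inv_cancel₀ hq0, one_mul]

theorem bmixed {i l j m : Fin (n+1)} (h1 : i < l) (h2 : l < j) (h3 : j < m) :
    bB k q n i j (h1.trans h2) * bB k q n l m (h2.trans h3) =
      bB k q n l m (h2.trans h3) * bB k q n i j (h1.trans h2) +
        (q - q⁻¹) • (bB k q n i m ((h1.trans h2).trans h3) * bB k q n l j h2) := by
  have h := RingQuot.mkAlgHom_rel k (BRel.mixed (k:=k) (q:=q) (n:=n) h1 h2 h3)
  rwa [map_mul, map_add, map_mul, map_smul, map_mul] at h

/-- `bB` does not depend on the proof argument -/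
theorem bB_irrel {i j : Fin (n+1)} (h h' : i < j) : bB k q n i j h = bB k q n i j h' := rfl

end PartG
end QSL
namespace QSL
section PartH
variable {k : Type} [Field k] {q : k} {n : ℕ}

/-- `b i j` for `i < j`, `1` for `i = j`. -/
def beta (k : Type) [Field k] (q : k) (n : ℕ) (i j : Fin (n+1)) : Balg k q n :=
  if h : i < j then bB k q n i j h else 1

theorem beta_diag (i : Fin (n+1)) : beta k q n i i = 1 := dif_neg (lt_irrefl i)

theorem beta_lt {i j : Fin (n+1)} (h : i < j) : beta k q n i j = bB k q n i j h := dif_pos h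

/-- The operator representing `X i j` (for `i ≤ j`) on `Balg ⊗ kΓ`. -/
def Top (k : Type) [Field k] (q : k) (n : ℕ) (i j : Fin (n+1)) :
    Module.End k ((Fin n →₀ ℤ) →₀ Balg k q n) :=
  Finsupp.lsum k fun γ => (q ^ (gfun n γ j - gfun n γ i)) •
    ((Finsupp.lsingle (cvec n i + γ)).comp (LinearMap.mulLeft k (beta k q n i j)))

theorem Top_single (i j : Fin (n+1)) (γ : Fin n →₀ ℤ) (b : Balg k q n) :
    Top k q n i j (Finsupp.single γ b) =
      q ^ (gfun n γ j - gfun n γ i) • Finsupp.single (cvec n i + γ) (beta k q n i j * b) := by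
  simp [Top]

theorem qscal (hq0 : q ≠ 0) {a b c d : ℤ} (h : a + b = c + d) :
    q ^ a * q ^ b = q ^ c * q ^ d := by
  rw [← zpow_add₀ hq0, ← zpow_add₀ hq0, h]

theorem gdiff_add (δ γ : Fin n →₀ ℤ) (r s : Fin (n+1)) :
    gfun n (δ + γ) s - gfun n (δ + γ) r =
      (gfun n δ s - gfun n δ r) + (gfun n γ s - gfun n γ r) := by
  rw [gfun_add, gfun_add]; ring

theorem gcdiff (l r s : Fin (n+1)) :
    gfun n (cvec n l) s - gfun n (cvec n l) r =
      (if s = l then 1 else 0) - (if r = l then 1 else 0) := by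
  rw [gfun_cvec, gfun_cvec]; ring

theorem elt_smul {c : k} {β1 β2 β3 β4 bb : Balg k q n} (h : β1 * β2 = c • (β3 * β4)) :
    β1 * (β2 * bb) = c • (β3 * (β4 * bb)) := by
  rw [← mul_assoc, h, smul_mul_assoc, mul_assoc]

theorem elt_comm {β1 β2 β3 β4 bb : Balg k q n} (h : β1 * β2 = β3 * β4) :
    β1 * (β2 * bb) = β3 * (β4 * bb) := by
  rw [← mul_assoc, h, mul_assoc]


theorem qscal1 (hq0 : q ≠ 0) {a1 a2 b1 b2 : ℤ} (h : a1 + a2 = 1 + (b1 + b2)) :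
    q ^ a1 * q ^ a2 = q * (q ^ b1 * q ^ b2) := by
  rw [← zpow_add₀ hq0, ← zpow_add₀ hq0, h, zpow_add₀ hq0, zpow_one]

theorem qscal2 (hq0 : q ≠ 0) {a1 a2 b1 b2 : ℤ} (h : a1 + a2 = b1 + b2) :
    (q ^ a1 * q ^ a2) * q = q * (q ^ b1 * q ^ b2) := by
  rw [mul_comm, qscal hq0 h]

/-- row relation for the operators, `i ≤ j < m`. -/
theorem Trow (hq0 : q ≠ 0) {i j m : Fin (n+1)} (hij : i ≤ j) (hjm : j < m) :
    Top k q n i j * Top k q n i m = q • (Top k q n i m * Top k q n i j) := by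
  refine Finsupp.lhom_ext fun γ b => ?_
  rw [Module.End.mul_apply, LinearMap.smul_apply, Module.End.mul_apply]
  rw [Top_single, map_smul, Top_single, Top_single, map_smul, Top_single]
  simp only [smul_smul]
  rcases eq_or_lt_of_le hij with rfl | hij'
  · -- i = j
    rw [beta_diag, one_mul, one_mul]
    congr 1
    refine qscal1 hq0 ?_
    rw [gdiff_add, gdiff_add, gcdiff, gcdiff, if_pos rfl,
      if_neg ((lt_of_le_of_lt hij hjm).ne' : m ≠ i)]
    ring
  · -- i < j
    have him : i < m := hij'.trans hjm
    rw [beta_lt hij', beta_lt (hij'.trans hjm)]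
    rw [elt_smul (brow hij' hjm), ← Finsupp.smul_single, smul_smul]
    congr 1
    refine qscal2 hq0 ?_
    rw [gdiff_add, gdiff_add, gcdiff, gcdiff, if_neg (hij'.ne' : j ≠ i),
      if_neg (him.ne' : m ≠ i)]
    ring

/-- column relation for the operators, `i < l ≤ j`. -/
theorem Tcol (hq0 : q ≠ 0) {i l j : Fin (n+1)} (hil : i < l) (hlj : l ≤ j) :
    Top k q n i j * Top k q n l j = q • (Top k q n l j * Top k q n i j) := by
  have hij : i < j := hil.trans_le hlj
  refine Finsupp.lhom_ext fun γ b => ?_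
  rw [Module.End.mul_apply, LinearMap.smul_apply, Module.End.mul_apply]
  rw [Top_single, map_smul, Top_single, Top_single, map_smul, Top_single]
  simp only [smul_smul]
  rw [add_left_comm (cvec n l) (cvec n i) γ]
  rcases eq_or_lt_of_le hlj with rfl | hlj'
  · -- l = j
    rw [beta_diag, beta_lt hij]
    simp only [one_mul]
    congr 1
    refine qscal1 hq0 ?_
    rw [gdiff_add, gdiff_add, gcdiff, gcdiff, if_pos rfl, if_neg (hil.ne : i ≠ l),
      if_neg (hil.ne' : l ≠ i)]
    ring
  · -- l < j
    rw [beta_lt hij, beta_lt hlj']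
    rw [elt_smul (bcol hil hlj'), ← Finsupp.smul_single, smul_smul]
    congr 1
    refine qscal2 hq0 ?_
    rw [gdiff_add, gdiff_add, gcdiff, gcdiff, if_neg (hlj'.ne' : j ≠ l),
      if_neg (hil.ne : i ≠ l), if_neg (hij.ne' : j ≠ i), if_neg (hil.ne' : l ≠ i)]
    ring

/-- swap relation for the operators, `i < l ≤ m < j`. -/
theorem Tswap (hq0 : q ≠ 0) {i l m j : Fin (n+1)} (hil : i < l) (hlm : l ≤ m) (hmj : m < j) :
    Top k q n i j * Top k q n l m = Top k q n l m * Top k q n i j := by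
  have hij : i < j := (hil.trans_le hlm).trans hmj
  refine Finsupp.lhom_ext fun γ b => ?_
  rw [Module.End.mul_apply, Module.End.mul_apply]
  rw [Top_single, map_smul, Top_single, Top_single, map_smul, Top_single]
  simp only [smul_smul]
  rw [add_left_comm (cvec n l) (cvec n i) γ]
  have hscal : q ^ (gfun n γ m - gfun n γ l) * q ^ (gfun n (cvec n l + γ) j - gfun n (cvec n l + γ) i)
      = q ^ (gfun n γ j - gfun n γ i) * q ^ (gfun n (cvec n i + γ) m - gfun n (cvec n i + γ) l) := by
    refine qscal hq0 ?_
    rw [gdiff_add, gdiff_add, gcdiff, gcdiff,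
      if_neg ((hmj.trans_le' hlm).ne' : j ≠ l), if_neg (hil.ne : i ≠ l),
      if_neg ((hlm.trans_lt' hil).ne' : m ≠ i), if_neg (hil.ne' : l ≠ i)]
    ring
  rw [hscal]
  rcases eq_or_lt_of_le hlm with rfl | hlm'
  · rw [beta_diag, beta_lt hij]
    rw [elt_comm ((mul_one (bB k q n i j hij)).trans (one_mul (bB k q n i j hij)).symm)]
  · rw [beta_lt hij, beta_lt hlm']
    rw [elt_comm (bswap hil hlm' hmj)]

/-- disjoint commutation for the operators, `i ≤ j < l ≤ m`. -/
theorem Tcomm (hq0 : q ≠ 0) {i j l m : Fin (n+1)} (hij : i ≤ j) (hjl : j < l) (hlm : l ≤ m) :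
    Top k q n i j * Top k q n l m = Top k q n l m * Top k q n i j := by
  have hil : i < l := hij.trans_lt hjl
  refine Finsupp.lhom_ext fun γ b => ?_
  rw [Module.End.mul_apply, Module.End.mul_apply]
  rw [Top_single, map_smul, Top_single, Top_single, map_smul, Top_single]
  simp only [smul_smul]
  rw [add_left_comm (cvec n l) (cvec n i) γ]
  have hscal : q ^ (gfun n γ m - gfun n γ l) * q ^ (gfun n (cvec n l + γ) j - gfun n (cvec n l + γ) i)
      = q ^ (gfun n γ j - gfun n γ i) * q ^ (gfun n (cvec n i + γ) m - gfun n (cvec n i + γ) l) := by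
    refine qscal hq0 ?_
    rw [gdiff_add, gdiff_add, gcdiff, gcdiff,
      if_neg (hjl.ne : j ≠ l), if_neg (hil.ne : i ≠ l),
      if_neg ((hlm.trans_lt' hil).ne' : m ≠ i), if_neg (hil.ne' : l ≠ i)]
    ring
  rw [hscal]
  rcases eq_or_lt_of_le hij with rfl | hij'
  · rw [beta_diag]
    rcases eq_or_lt_of_le hlm with rfl | hlm'
    · rw [beta_diag]
    · rw [beta_lt hlm', elt_comm ((one_mul _).trans (mul_one _).symm)]
  · rw [beta_lt hij']
    rcases eq_or_lt_of_le hlm with rfl | hlm'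
    · rw [beta_diag, elt_comm ((mul_one _).trans (one_mul _).symm)]
    · rw [beta_lt hlm', elt_comm (bcomm hij' hjl hlm')]

/-- adjacent mixed relation for the operators, `i < j < m`. -/
theorem Tadj (hq0 : q ≠ 0) {i j m : Fin (n+1)} (hij : i < j) (hjm : j < m) :
    Top k q n i j * Top k q n j m =
      Top k q n j m * Top k q n i j +
        (q - q⁻¹) • (Top k q n i m * Top k q n j j) := by
  have him : i < m := hij.trans hjm
  refine Finsupp.lhom_ext fun γ b => ?_
  rw [Module.End.mul_apply, LinearMap.add_apply, Module.End.mul_apply,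
    LinearMap.smul_apply, Module.End.mul_apply]
  rw [Top_single, map_smul, Top_single, Top_single, map_smul, Top_single,
    Top_single, map_smul, Top_single]
  simp only [smul_smul]
  rw [add_left_comm (cvec n j) (cvec n i) γ]
  rw [beta_diag, beta_lt hij, beta_lt hjm, beta_lt him, one_mul]
  -- scalars
  have e1 : q ^ (gfun n γ m - gfun n γ j) * q ^ (gfun n (cvec n j + γ) j - gfun n (cvec n j + γ) i)
      = q ^ (gfun n γ m - gfun n γ i) * q := by
    rw [← zpow_add₀ hq0, ← zpow_add_one₀ hq0]
    congr 1
    rw [gdiff_add, gcdiff, if_pos rfl, if_neg (hij.ne : i ≠ j)]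
    ring
  have e2 : q ^ (gfun n γ j - gfun n γ i) * q ^ (gfun n (cvec n i + γ) m - gfun n (cvec n i + γ) j)
      = q ^ (gfun n γ m - gfun n γ i) := by
    rw [← zpow_add₀ hq0]
    congr 1
    rw [gdiff_add, gcdiff, if_neg (him.ne' : m ≠ i), if_neg (hij.ne' : j ≠ i)]
    ring
  have e3 : q ^ (gfun n γ j - gfun n γ j) * q ^ (gfun n (cvec n j + γ) m - gfun n (cvec n j + γ) i)
      = q ^ (gfun n γ m - gfun n γ i) := by
    rw [← zpow_add₀ hq0]
    congr 1
    rw [gdiff_add, gcdiff, if_neg (hjm.ne' : m ≠ j), if_neg (hij.ne : i ≠ j)]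
    ring
  rw [e1, e2, e3]
  rw [← smul_smul (q ^ (gfun n γ m - gfun n γ i)) q, Finsupp.smul_single,
    ← mul_assoc (bB k q n i j hij), ← smul_mul_assoc, badj' hq0 hij hjm, add_mul,
    mul_assoc (bB k q n j m hjm), smul_mul_assoc, Finsupp.single_add]
  rw [← Finsupp.smul_single, smul_add, smul_smul,
    mul_comm (q ^ (gfun n γ m - gfun n γ i)) (q - q⁻¹)]

/-- full mixed relation for the operators, `i < l < j < m`. -/
theorem Tmixed (hq0 : q ≠ 0) {i l j m : Fin (n+1)} (hil : i < l) (hlj : l < j) (hjm : j < m) :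
    Top k q n i j * Top k q n l m =
      Top k q n l m * Top k q n i j +
        (q - q⁻¹) • (Top k q n i m * Top k q n l j) := by
  have hij : i < j := hil.trans hlj
  have him : i < m := hij.trans hjm
  have hlm : l < m := hlj.trans hjm
  refine Finsupp.lhom_ext fun γ b => ?_
  rw [Module.End.mul_apply, LinearMap.add_apply, Module.End.mul_apply,
    LinearMap.smul_apply, Module.End.mul_apply]
  rw [Top_single, map_smul, Top_single, Top_single, map_smul, Top_single,
    Top_single, map_smul, Top_single]
  simp only [smul_smul]
  rw [add_left_comm (cvec n l) (cvec n i) γ]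
  rw [beta_lt hij, beta_lt hlm, beta_lt him, beta_lt hlj]
  have e1 : q ^ (gfun n γ m - gfun n γ l) * q ^ (gfun n (cvec n l + γ) j - gfun n (cvec n l + γ) i)
      = q ^ ((gfun n γ m - gfun n γ l) + (gfun n γ j - gfun n γ i)) := by
    rw [← zpow_add₀ hq0]; congr 1
    rw [gdiff_add, gcdiff, if_neg (hlj.ne' : j ≠ l), if_neg (hil.ne : i ≠ l)]; ring
  have e2 : q ^ (gfun n γ j - gfun n γ i) * q ^ (gfun n (cvec n i + γ) m - gfun n (cvec n i + γ) l)
      = q ^ ((gfun n γ m - gfun n γ l) + (gfun n γ j - gfun n γ i)) := by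
    rw [← zpow_add₀ hq0]; congr 1
    rw [gdiff_add, gcdiff, if_neg (him.ne' : m ≠ i), if_neg (hil.ne' : l ≠ i)]; ring
  have e3 : q ^ (gfun n γ j - gfun n γ l) * q ^ (gfun n (cvec n l + γ) m - gfun n (cvec n l + γ) i)
      = q ^ ((gfun n γ m - gfun n γ l) + (gfun n γ j - gfun n γ i)) := by
    rw [← zpow_add₀ hq0]; congr 1
    rw [gdiff_add, gcdiff, if_neg (hlm.ne' : m ≠ l), if_neg (hil.ne : i ≠ l)]; ring
  rw [e1, e2, e3]
  rw [← mul_assoc (bB k q n i j hij), bmixed hil hlj hjm, add_mul,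
    mul_assoc (bB k q n l m hlm), smul_mul_assoc, mul_assoc (bB k q n i m him),
    Finsupp.single_add, ← Finsupp.smul_single, smul_add, smul_smul,
    mul_comm (q ^ ((gfun n γ m - gfun n γ l) + (gfun n γ j - gfun n γ i))) (q - q⁻¹)]

end PartH
end QSL
namespace QSL
section PartI
variable {k : Type} [Field k] {q : k} {n : ℕ}

theorem Tdiag_single (i : Fin (n+1)) (γ : Fin n →₀ ℤ) (b : Balg k q n) :
    Top k q n i i (Finsupp.single γ b) = Finsupp.single (cvec n i + γ) b := by
  rw [Top_single, beta_diag, one_mul, sub_self, zpow_zero, one_smul]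

theorem Tdiag_list (l : List (Fin (n+1))) (γ : Fin n →₀ ℤ) (b : Balg k q n) :
    ((l.map (fun i => Top k q n i i)).prod) (Finsupp.single γ b) =
      Finsupp.single ((l.map (cvec n)).sum + γ) b := by
  induction l with
  | nil => simp
  | cons a t ih =>
      rw [List.map_cons, List.prod_cons, Module.End.mul_apply, ih,
        Tdiag_single, List.map_cons, List.sum_cons, add_assoc]

theorem Tdiag_prod :
    (List.ofFn fun i => Top k q n i i).prod = 1 := by
  refine Finsupp.lhom_ext fun γ b => ?_
  rw [List.ofFn_eq_map, Tdiag_list]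
  have h0 : (List.map (cvec n) (List.finRange (n+1))).sum = 0 := by
    rw [← Fin.sum_univ_def]
    exact cvec_sum
  rw [h0, zero_add, Module.End.one_apply]

/-- the representation on the free algebra -/
def Phi0 (k : Type) [Field k] (q : k) (n : ℕ) :
    FreeAlgebra k (Fin (n+1) × Fin (n+1)) →ₐ[k]
      Module.End k ((Fin n →₀ ℤ) →₀ Balg k q n) :=
  FreeAlgebra.lift k (fun p => if p.1 ≤ p.2 then Top k q n p.1 p.2 else 0)

theorem Phi0_X (i j : Fin (n+1)) :
    Phi0 k q n (Xf k n i j) = if i ≤ j then Top k q n i j else 0 := by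
  simp [Phi0, Xf]

theorem Phi0_rel (hq0 : q ≠ 0) :
    ∀ ⦃x y⦄, SLRel k q n x y → Phi0 k q n x = Phi0 k q n y := by
  intro x y hxy
  induction hxy with
  | @row i j m h =>
      rw [map_mul, map_smul, map_mul, Phi0_X, Phi0_X]
      by_cases hij : i ≤ j
      · rw [if_pos hij, if_pos (hij.trans h.le)]
        exact Trow hq0 hij h
      · rw [if_neg hij, zero_mul, mul_zero, smul_zero]
  | @col i l j h =>
      rw [map_mul, map_smul, map_mul, Phi0_X, Phi0_X]
      by_cases hlj : l ≤ j
      · rw [if_pos hlj, if_pos (h.le.trans hlj)]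
        exact Tcol hq0 h hlj
      · rw [if_neg hlj, mul_zero, zero_mul, smul_zero]
  | @swap i l j m h1 h2 =>
      rw [map_mul, map_mul, Phi0_X, Phi0_X]
      by_cases hlm : l ≤ m
      · rw [if_pos hlm, if_pos (((h1.trans_le hlm).trans h2).le)]
        exact Tswap hq0 h1 hlm h2
      · rw [if_neg hlm, mul_zero, zero_mul]
  | @mixed i l j m h1 h2 =>
      rw [map_mul, map_add, map_mul, map_smul, map_mul, Phi0_X, Phi0_X, Phi0_X, Phi0_X]
      by_cases hij : i ≤ j
      · by_cases hlm : l ≤ m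
        · rw [if_pos hij, if_pos hlm, if_pos (hij.trans h2.le)]
          rcases lt_trichotomy j l with hjl | rfl | hlj
          · rw [if_neg (not_le.mpr hjl), mul_zero, smul_zero, add_zero]
            exact Tcomm hq0 hij hjl hlm
          · rw [if_pos le_rfl]
            exact Tadj hq0 h1 h2
          · rw [if_pos hlj.le]
            exact Tmixed hq0 h1 hlj h2
        · rw [if_neg hlm, mul_zero, zero_mul, zero_add,
            if_neg (not_le.mpr (h2.trans (not_le.mp hlm))), mul_zero, smul_zero]
      · rw [if_neg hij, zero_mul, mul_zero, zero_add]
        rw [if_neg (not_le.mpr ((not_le.mp hij).trans h1))]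
        rw [mul_zero, smul_zero]
  | det =>
      rw [map_one, qdet, map_sum]
      rw [Finset.sum_eq_single_of_mem (1 : Equiv.Perm (Fin (n+1))) (Finset.mem_univ _)]
      · rw [invCount_one, pow_zero, one_smul, map_list_prod, List.map_ofFn]
        have hfn : ((Phi0 k q n) ∘ fun i => Xf k n i ((1 : Equiv.Perm (Fin (n+1))) i)) =
            fun i => Top k q n i i := by
          funext i
          simp only [Function.comp_apply, Equiv.Perm.one_apply, Phi0_X, if_pos le_rfl]
        rw [hfn, Tdiag_prod]
      · intro σ _ hσ
        obtain ⟨i, hi⟩ := exists_lt_of_ne_one hσ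
        rw [map_smul, map_list_prod, List.map_ofFn]
        have hz : (0 : Module.End k ((Fin n →₀ ℤ) →₀ Balg k q n)) ∈
            List.ofFn ((Phi0 k q n) ∘ fun i => Xf k n i (σ i)) := by
          rw [List.mem_ofFn]
          exact ⟨i, by rw [Function.comp_apply, Phi0_X, if_neg (not_le.mpr hi)]⟩
        rw [List.prod_eq_zero hz, smul_zero]

end PartI
end QSL
namespace QSL
section PartJ
variable {k : Type} [Field k] {q : k} {n : ℕ}

/-- the representation of `O_q(SL)` -/
def PhiSL (k : Type) [Field k] (q : k) (n : ℕ) (hq0 : q ≠ 0) :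
    OqSL k q n →ₐ[k] Module.End k ((Fin n →₀ ℤ) →₀ Balg k q n) :=
  RingQuot.liftAlgHom k ⟨Phi0 k q n, Phi0_rel hq0⟩

theorem PhiSL_X (hq0 : q ≠ 0) (i j : Fin (n+1)) :
    PhiSL k q n hq0 (XSL k q n i j) = if i ≤ j then Top k q n i j else 0 := by
  rw [XSL, PhiSL, RingQuot.liftAlgHom_mkAlgHom_apply]
  exact Phi0_X i j

theorem PhiSL_rel (hq0 : q ≠ 0) :
    ∀ ⦃x y⦄, BpRel k q n x y → PhiSL k q n hq0 x = PhiSL k q n hq0 y := by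
  intro x y hxy
  induction hxy with
  | @zero i j h =>
      rw [map_zero, PhiSL_X, if_neg (not_le.mpr h)]

/-- the representation of `O_q(B⁺)` -/
def PhiB (k : Type) [Field k] (q : k) (n : ℕ) (hq0 : q ≠ 0) :
    OqBp k q n →ₐ[k] Module.End k ((Fin n →₀ ℤ) →₀ Balg k q n) :=
  RingQuot.liftAlgHom k ⟨PhiSL k q n hq0, PhiSL_rel hq0⟩

theorem PhiB_X (hq0 : q ≠ 0) (i j : Fin (n+1)) :
    PhiB k q n hq0 (XBp k q n i j) = if i ≤ j then Top k q n i j else 0 := by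
  rw [XBp, PhiB, RingQuot.liftAlgHom_mkAlgHom_apply]
  exact PhiSL_X hq0 i j

/-- the inverse shift operator -/
def Sneg (k : Type) [Field k] (q : k) (n : ℕ) (i : Fin (n+1)) :
    Module.End k ((Fin n →₀ ℤ) →₀ Balg k q n) :=
  Finsupp.lsum k fun γ => Finsupp.lsingle (-cvec n i + γ)

theorem Sneg_single (i : Fin (n+1)) (γ : Fin n →₀ ℤ) (b : Balg k q n) :
    Sneg k q n i (Finsupp.single γ b) = Finsupp.single (-cvec n i + γ) b := by
  simp [Sneg]

theorem Top_Sneg (i : Fin (n+1)) :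
    Top k q n i i * Sneg k q n i = 1 := by
  refine Finsupp.lhom_ext fun γ b => ?_
  rw [Module.End.mul_apply, Sneg_single, Tdiag_single, add_neg_cancel_left,
    Module.End.one_apply]

theorem PhiB_inv (hq0 : q ≠ 0) (i : Fin (n+1)) :
    PhiB k q n hq0 (Ring.inverse (XBp k q n i i)) = Sneg k q n i := by
  refine map_two_sided_inv (PhiB k q n hq0) (h_ud i) (h_du i) ?_
  rw [PhiB_X hq0, if_pos le_rfl]
  exact Top_Sneg i

theorem PhiB_y (hq0 : q ≠ 0) {i j : Fin (n+1)} (h : i < j) (y : Balg k q n) :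
    PhiB k q n hq0 (yY k q n i j) (Finsupp.single 0 y) =
      Finsupp.single 0 (bB k q n i j h * y) := by
  rw [yY, map_mul, Module.End.mul_apply, PhiB_inv hq0, PhiB_X hq0, if_pos h.le]
  rw [Top_single, gfun_zero, gfun_zero, sub_zero, zpow_zero, one_smul, add_zero,
    beta_lt h, Sneg_single, neg_add_cancel]

theorem retract (hq0 : q ≠ 0) (x : Balg k q n) :
    ∀ y, PhiB k q n hq0 (psiMap k q n hq0 x) (Finsupp.single 0 y) =
      Finsupp.single 0 (x * y) := by
  have hx : x ∈ (⊤ : Subalgebra k (Balg k q n)) := trivial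
  rw [← balg_adjoin_top (k := k) (q := q) (n := n)] at hx
  induction hx using Algebra.adjoin_induction with
  | mem a ha =>
      obtain ⟨p, rfl⟩ := ha
      intro y
      rw [psiMap_bB hq0 p.2]
      exact PhiB_y hq0 p.2 y
  | algebraMap c =>
      intro y
      rw [AlgHom.commutes, AlgHom.commutes, Algebra.algebraMap_eq_smul_one,
        LinearMap.smul_apply, Module.End.one_apply, Finsupp.smul_single,
        Algebra.smul_def]
  | add a b _ _ ha hb =>
      intro y
      rw [map_add, map_add, LinearMap.add_apply, ha, hb, add_mul, Finsupp.single_add]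
  | mul a b _ _ ha hb =>
      intro y
      rw [map_mul, map_mul, Module.End.mul_apply, hb, ha, mul_assoc]

theorem psi_inj (hq0 : q ≠ 0) : Function.Injective (psiMap k q n hq0) := by
  rw [injective_iff_map_eq_zero]
  intro a ha
  have h := retract hq0 a 1
  rw [ha, map_zero, LinearMap.zero_apply, mul_one] at h
  exact Finsupp.single_eq_zero.mp h.symm

end PartJ
end QSL
open QSL in
/-- There is a well-defined `k`-algebra homomorphism `ψ : B → O_q(B⁺)` with `ψ(b_{ij}) = y_{ij}`,
and `ψ` is an isomorphism of `B` onto the subalgebra `O_q(N⁺)`. -/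
theorem presented_algebra_iso_OqNp (k : Type) [Field k] (q : k) (hq0 : q ≠ 0)
    (hq : ∀ m : ℕ, 0 < m → q ^ m ≠ 1) (n : ℕ) (hn : 1 ≤ n) :
    ∃ ψ : Balg k q n →ₐ[k] OqBp k q n,
      (∀ (i j : Fin (n+1)) (h : i < j), ψ (bB k q n i j h) = yY k q n i j) ∧
      Function.Injective ψ ∧
      ψ.range = OqNp k q n := by
  exact ⟨psiMap k q n hq0, fun i j h => psiMap_bB hq0 h, psi_inj hq0, psiMap_range hq0⟩
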